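/- Let $\gamma_1, \gamma_2 \in SU(2)$ with eigenvalues $\{\lambda_1, \bar\lambda_1\}$ and $\{\lambda_2, \bar\lambda_2\}$ respectively, and let $p \ge 1$ be an integer. Then there exists $z \in U(1)$ such that the multisets $\{z\lambda_1, z\bar\lambda_1, z^p\}$ and $\{\lambda_2, \bar\lambda_2, z^{p+2}\}$ are equal if and only if either (a) $\lambda_1 = \pm\lambda_2$ or $\lambda_1 = \pm\bar\lambda_2$, or (b) $\lambda_1^p = \lambda_2^{p+1}$ or $\lambda_1^p = \bar\lambda_2^{p+1}$. -/

import Mathlib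

open ComplexConjugate

lemma triple_eq_iff {α : Type*} (a b c d e f : α) :
    ({a,b,c} : Multiset α) = {d,e,f} ↔
      (a=d ∧ b=e ∧ c=f) ∨ (a=d ∧ b=f ∧ c=e) ∨ (a=e ∧ b=d ∧ c=f) ∨
      (a=e ∧ b=f ∧ c=d) ∨ (a=f ∧ b=d ∧ c=e) ∨ (a=f ∧ b=e ∧ c=d) := by
  constructor
  · intro h
    simp only [Multiset.insert_eq_cons, Multiset.cons_eq_cons,
      Multiset.singleton_eq_cons_iff] at h
    aesop
  · rintro (⟨h1,h2,h3⟩|⟨h1,h2,h3⟩|⟨h1,h2,h3⟩|⟨h1,h2,h3⟩|⟨h1,h2,h3⟩|⟨h1,h2,h3⟩) <;>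
      subst h1 <;> subst h2 <;> subst h3 <;>
      simp only [Multiset.insert_eq_cons, ← Multiset.singleton_add] <;> abel

lemma ms_swap12 {α : Type*} (a b c : α) : ({a,b,c} : Multiset α) = {b,a,c} := by
  simp only [Multiset.insert_eq_cons, ← Multiset.singleton_add]; abel

lemma ms_swap13 {α : Type*} (a b c : α) : ({a,b,c} : Multiset α) = {c,b,a} := by
  simp only [Multiset.insert_eq_cons, ← Multiset.singleton_add]; abel

lemma ms_rot {α : Type*} (a b c : α) : ({a,b,c} : Multiset α) = {b,c,a} := by
  simp only [Multiset.insert_eq_cons, ← Multiset.singleton_add]; abel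

/-- Eigenvalue matching criterion: for `γ₁, γ₂ ∈ SU(2)` with eigenvalues `{λ₁, λ̄₁}`,
`{λ₂, λ̄₂}`, there is `z ∈ U(1)` with `{zλ₁, zλ̄₁, zᵖ} = {λ₂, λ̄₂, z^{p+2}}` as multisets
iff (a) `λ₁ = ±λ₂` or `λ₁ = ±λ̄₂`, or (b) `λ₁ᵖ = λ₂^{p+1}` or `λ₁ᵖ = λ̄₂^{p+1}`. -/
theorem fixed_point_criterion (p : ℕ) (hp : 1 ≤ p) (l₁ l₂ : ℂ)
    (hl₁ : ‖l₁‖ = 1) (hl₂ : ‖l₂‖ = 1) :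
    (∃ z : ℂ, ‖z‖ = 1 ∧
      ({z * l₁, z * conj l₁, z ^ p} : Multiset ℂ) = {l₂, conj l₂, z ^ (p + 2)}) ↔
    ((l₁ = l₂ ∨ l₁ = -l₂ ∨ l₁ = conj l₂ ∨ l₁ = -conj l₂) ∨
     (l₁ ^ p = l₂ ^ (p + 1) ∨ l₁ ^ p = (conj l₂) ^ (p + 1))) := by
  have hl₁c : l₁ * conj l₁ = 1 := by
    rw [Complex.mul_conj, Complex.normSq_eq_norm_sq, hl₁]; norm_num
  have hl₂c : l₂ * conj l₂ = 1 := by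
    rw [Complex.mul_conj, Complex.normSq_eq_norm_sq, hl₂]; norm_num
  constructor
  · rintro ⟨z, hz, heq⟩
    have hz0 : z ≠ 0 := by intro h; rw [h] at hz; simp at hz
    rw [triple_eq_iff] at heq
    rcases heq with ⟨h1,h2,h3⟩|⟨h1,h2,h3⟩|⟨h1,h2,h3⟩|⟨h1,h2,h3⟩|⟨h1,h2,h3⟩|⟨h1,h2,h3⟩
    · -- z² = 1, l₁ = ±l₂
      have hpz : z ^ p * 1 = z ^ p * z ^ 2 := by rw [pow_add] at h3; rw [mul_one]; exact h3
      have hz2 : z ^ 2 = 1 := (mul_left_cancel₀ (pow_ne_zero p hz0) hpz).symm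
      have hfac : (z - 1) * (z + 1) = 0 := by linear_combination hz2
      rcases mul_eq_zero.mp hfac with h|h
      · exact Or.inl (Or.inl (by linear_combination h1 - l₁ * h))
      · exact Or.inl (Or.inr (Or.inl (by linear_combination -h1 + l₁ * h)))
    · -- l₁^p = l₂^(p+1)
      have hc : conj l₁ = z ^ (p + 1) := mul_left_cancel₀ hz0 (h2.trans (pow_succ' z (p+1)))
      have e1 : l₁ * z ^ (p + 1) = 1 := by rw [← hc]; exact hl₁c
      have e2 : l₂ * z ^ p = 1 := by rw [h3]; exact hl₂c
      have E1 : l₁ ^ p * z ^ ((p+1)*p) = 1 := by rw [pow_mul, ← mul_pow, e1, one_pow]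
      have E2 : l₂ ^ (p+1) * z ^ ((p+1)*p) = 1 := by
        rw [Nat.mul_comm (p+1) p, pow_mul, ← mul_pow, e2, one_pow]
      exact Or.inr (Or.inl (mul_right_cancel₀ (pow_ne_zero _ hz0) (E1.trans E2.symm)))
    · -- z² = 1, l₁ = ±conj l₂
      have hpz : z ^ p * 1 = z ^ p * z ^ 2 := by rw [pow_add] at h3; rw [mul_one]; exact h3
      have hz2 : z ^ 2 = 1 := (mul_left_cancel₀ (pow_ne_zero p hz0) hpz).symm
      have hfac : (z - 1) * (z + 1) = 0 := by linear_combination hz2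
      rcases mul_eq_zero.mp hfac with h|h
      · exact Or.inl (Or.inr (Or.inr (Or.inl (by linear_combination h1 - l₁ * h))))
      · exact Or.inl (Or.inr (Or.inr (Or.inr (by linear_combination -h1 + l₁ * h))))
    · -- l₁^p = (conj l₂)^(p+1)
      have hc : conj l₁ = z ^ (p + 1) := mul_left_cancel₀ hz0 (h2.trans (pow_succ' z (p+1)))
      have e1 : l₁ * z ^ (p + 1) = 1 := by rw [← hc]; exact hl₁c
      have e2 : conj l₂ * z ^ p = 1 := by rw [h3, mul_comm]; exact hl₂c
      have E1 : l₁ ^ p * z ^ ((p+1)*p) = 1 := by rw [pow_mul, ← mul_pow, e1, one_pow]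
      have E2 : (conj l₂) ^ (p+1) * z ^ ((p+1)*p) = 1 := by
        rw [Nat.mul_comm (p+1) p, pow_mul, ← mul_pow, e2, one_pow]
      exact Or.inr (Or.inr (mul_right_cancel₀ (pow_ne_zero _ hz0) (E1.trans E2.symm)))
    · -- l₁ = z^(p+1), conj l₂ = z^p : l₁^p = (conj l₂)^(p+1)
      have hl : l₁ = z ^ (p + 1) := mul_left_cancel₀ hz0 (h1.trans (pow_succ' z (p+1)))
      refine Or.inr (Or.inr ?_)
      rw [hl, ← h3, ← pow_mul, ← pow_mul, Nat.mul_comm]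
    · -- l₁ = z^(p+1), l₂ = z^p : l₁^p = l₂^(p+1)
      have hl : l₁ = z ^ (p + 1) := mul_left_cancel₀ hz0 (h1.trans (pow_succ' z (p+1)))
      refine Or.inr (Or.inl ?_)
      rw [hl, ← h3, ← pow_mul, ← pow_mul, Nat.mul_comm]
  · rintro ((h|h|h|h)|(h|h))
    · exact ⟨1, by norm_num, by subst h; simp⟩
    · refine ⟨-1, by norm_num, ?_⟩
      have hpow : (-1:ℂ) ^ (p+2) = (-1) ^ p := by rw [pow_add]; norm_num
      have e1 : (-1:ℂ) * l₁ = l₂ := by rw [h]; ring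
      have e2 : (-1:ℂ) * conj l₁ = conj l₂ := by rw [h, map_neg]; ring
      rw [e1, e2, hpow]
    · refine ⟨1, by norm_num, ?_⟩
      subst h
      simp only [one_mul, one_pow, Complex.conj_conj]
      exact ms_swap12 _ _ _
    · refine ⟨-1, by norm_num, ?_⟩
      have hpow : (-1:ℂ) ^ (p+2) = (-1) ^ p := by rw [pow_add]; norm_num
      have e1 : (-1:ℂ) * l₁ = conj l₂ := by rw [h]; ring
      have e2 : (-1:ℂ) * conj l₁ = l₂ := by rw [h, map_neg, Complex.conj_conj]; ring
      rw [e1, e2, hpow]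
      exact ms_swap12 _ _ _
    · refine ⟨l₁ * conj l₂, by simp [hl₁, hl₂], ?_⟩
      have e2 : (l₁ * conj l₂) * conj l₁ = conj l₂ := by
        calc (l₁ * conj l₂) * conj l₁ = conj l₂ * (l₁ * conj l₁) := by ring
          _ = conj l₂ := by rw [hl₁c, mul_one]
      have e3 : (l₁ * conj l₂) ^ p = l₂ := by
        rw [mul_pow, h]
        calc l₂ ^ (p+1) * (conj l₂) ^ p = l₂ * (l₂ * conj l₂) ^ p := by ring
          _ = l₂ := by rw [hl₂c, one_pow, mul_one]
      have e4 : (l₁ * conj l₂) ^ (p + 2) = (l₁ * conj l₂) * l₁ := by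
        rw [pow_add, e3]
        calc l₂ * (l₁ * conj l₂) ^ 2 = ((l₁ * conj l₂) * l₁) * (l₂ * conj l₂) := by ring
          _ = (l₁ * conj l₂) * l₁ := by rw [hl₂c, mul_one]
      rw [e2, e3, e4]
      exact ms_swap13 _ _ _
    · refine ⟨l₁ * l₂, by simp [hl₁, hl₂], ?_⟩
      have e2 : (l₁ * l₂) * conj l₁ = l₂ := by
        calc (l₁ * l₂) * conj l₁ = l₂ * (l₁ * conj l₁) := by ring
          _ = l₂ := by rw [hl₁c, mul_one]
      have e3 : (l₁ * l₂) ^ p = conj l₂ := by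
        rw [mul_pow, h]
        calc (conj l₂) ^ (p+1) * l₂ ^ p = conj l₂ * (l₂ * conj l₂) ^ p := by ring
          _ = conj l₂ := by rw [hl₂c, one_pow, mul_one]
      have e4 : (l₁ * l₂) ^ (p + 2) = (l₁ * l₂) * l₁ := by
        rw [pow_add, e3]
        calc conj l₂ * (l₁ * l₂) ^ 2 = ((l₁ * l₂) * l₁) * (l₂ * conj l₂) := by ring
          _ = (l₁ * l₂) * l₁ := by rw [hl₂c, mul_one]
      rw [e2, e3, e4]
      exact ms_rot _ _ _
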